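/- Let G be a finite group and H, K subgroups such that the set of prime divisors of |H| and of |K| are disjoint and their union is the set of prime divisors of |G|, with |G| square-free. Then H ∩ K^g = {1} for all g in G, and there is exactly one (H,K)-double coset in G. -/

import Mathlib

open Pointwise

/-- If `G` has square-free order and `H`, `K` are subgroups whose sets of prime divisors are
disjoint with union the set of prime divisors of `|G|`, then `H ∩ K^g = 1` for all `g ∈ G`
and there is exactly one `(H,K)`-double coset in `G`. -/
theorem inf_conj_eq_bot_and_one_double_coset (G : Type*) [Group G] [Fintype G]
    (hsq : Squarefree (Fintype.card G)) (H K : Subgroup G)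
    (hdisj : Disjoint (Nat.card H).primeFactors (Nat.card K).primeFactors)
    (hunion : (Nat.card H).primeFactors ∪ (Nat.card K).primeFactors =
      (Fintype.card G).primeFactors) :
    (∀ g : G, H ⊓ (MulAut.conj g⁻¹ • K) = ⊥) ∧
      Nat.card (DoubleCoset.Quotient (H : Set G) (K : Set G)) = 1 := by
  have hH0 : Nat.card H ≠ 0 := Nat.card_pos.ne'
  have hK0 : Nat.card K ≠ 0 := Nat.card_pos.ne'
  have hcop : Nat.Coprime (Nat.card H) (Nat.card K) :=
    (Nat.disjoint_primeFactors hH0 hK0).mp hdisj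
  -- first part
  have hinf : ∀ g : G, H ⊓ (MulAut.conj g⁻¹ • K) = ⊥ := by
    intro g
    have hcard : Nat.card (MulAut.conj g⁻¹ • K : Subgroup G) = Nat.card K :=
      (Nat.card_congr (Subgroup.equivSMul (MulAut.conj g⁻¹) K).toEquiv).symm
    exact Subgroup.inf_eq_bot_of_coprime (by rw [hcard]; exact hcop)
  refine ⟨hinf, ?_⟩
  -- |H| * |K| = |G|
  have hHsq : Squarefree (Nat.card H) := by
    refine hsq.squarefree_of_dvd ?_
    simpa [Nat.card_eq_fintype_card] using Subgroup.card_subgroup_dvd_card H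
  have hKsq : Squarefree (Nat.card K) := by
    refine hsq.squarefree_of_dvd ?_
    simpa [Nat.card_eq_fintype_card] using Subgroup.card_subgroup_dvd_card K
  have hmul : Nat.card H * Nat.card K = Fintype.card G := by
    have h1 : ∏ p ∈ (Nat.card H).primeFactors, p = Nat.card H :=
      Nat.prod_primeFactors_of_squarefree hHsq
    have h2 : ∏ p ∈ (Nat.card K).primeFactors, p = Nat.card K :=
      Nat.prod_primeFactors_of_squarefree hKsq
    have h3 : ∏ p ∈ (Fintype.card G).primeFactors, p = Fintype.card G :=
      Nat.prod_primeFactors_of_squarefree hsq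
    rw [← h1, ← h2, ← h3, ← Finset.prod_union hdisj, hunion]
  -- every double coset is everything
  have hbij : ∀ a : G, Function.Bijective (fun p : H × K => (p.1 : G) * a * (p.2 : G)) := by
    intro a
    rw [Nat.bijective_iff_injective_and_card]
    constructor
    · rintro ⟨h1, k1⟩ ⟨h2, k2⟩ heq
      simp only at heq
      have key2 : (h2 : G)⁻¹ * (h1 : G) = a * ((k2 : G) * (k1 : G)⁻¹) * a⁻¹ := by
        calc (h2 : G)⁻¹ * (h1 : G)
            = (h2 : G)⁻¹ * ((h1 : G) * a * k1) * (k1 : G)⁻¹ * a⁻¹ := by group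
          _ = (h2 : G)⁻¹ * ((h2 : G) * a * k2) * (k1 : G)⁻¹ * a⁻¹ := by rw [heq]
          _ = a * ((k2 : G) * (k1 : G)⁻¹) * a⁻¹ := by group
      have hx : ((h2 : G)⁻¹ * (h1 : G)) ∈ H ⊓ (MulAut.conj a⁻¹⁻¹ • K) := by
        refine Subgroup.mem_inf.mpr ⟨H.mul_mem (H.inv_mem h2.2) h1.2, ?_⟩
        refine (Subgroup.mem_smul_pointwise_iff_exists _ _ _).mpr
          ⟨(k2 : G) * (k1 : G)⁻¹, K.mul_mem k2.2 (K.inv_mem k1.2), ?_⟩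
        rw [key2]
        simp only [MulAut.smul_def, MulAut.conj_apply, inv_inv]
      rw [hinf a⁻¹, Subgroup.mem_bot] at hx
      have hh : h1 = h2 := by
        ext
        exact (inv_mul_eq_one.mp hx).symm ▸ rfl
      have hk : k1 = k2 := by
        have : (h1 : G) * a * k1 = (h1 : G) * a * k2 := by rw [hh] at heq ⊢; exact heq
        ext
        exact mul_left_cancel this
      exact Prod.ext hh hk
    · rw [Nat.card_prod, hmul, Nat.card_eq_fintype_card]
  have hsub : ∀ a b : G, DoubleCoset.mk H K a = DoubleCoset.mk H K b := by
    intro a b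
    obtain ⟨⟨h, k⟩, hp⟩ := (hbij a).2 b
    exact ((DoubleCoset.eq H K a b).mpr ⟨h, h.2, k, k.2, hp.symm⟩)
  have : Subsingleton (DoubleCoset.Quotient (H : Set G) (K : Set G)) := by
    constructor
    intro x y
    induction x using Quotient.inductionOn'
    induction y using Quotient.inductionOn'
    exact hsub _ _
  exact Nat.card_eq_one_iff_unique.mpr ⟨this, ⟨DoubleCoset.mk H K 1⟩⟩
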